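/- Let G be a connected finite undirected weighted graph on V = {1,…,n} with n ≥ 1, let the seed set be a single node S = {s}, and suppose λ·A_{ii'} > 1 for every edge {i,i'} ∈ E. Then the unique global minimizer û of the TV-minimization objective f(u) = (1−u_s)²/2 + ∑_{i≠s} (α/2) u_i² + λ‖u‖_TV is a constant vector, namely û_i = 1/(1 + α·(n−1)) for every node i ∈ V. -/

import Mathlib

open Finset
open scoped Classical

/-- Total variation of `u` on the weighted graph with symmetric weight matrix `A`:
each undirected edge `{i,i'}` (i.e. `A i i' > 0`) is counted once, via its
orientation `i < i'`. -/
noncomputable def graphTV {n : ℕ} (A : Fin n → Fin n → ℝ) (u : Fin n → ℝ) : ℝ :=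
  ∑ i : Fin n, ∑ j : Fin n, if i < j ∧ 0 < A i j then A i j * |u i - u j| else 0

/-- The TV-minimization objective
`f(u) = ∑_{i∈S} (1−u_i)²/2 + ∑_{i∉S} (α/2) u_i² + λ‖u‖_TV`. -/
noncomputable def tvObj {n : ℕ} (A : Fin n → Fin n → ℝ) (S : Finset (Fin n))
    (lam alpha : ℝ) (u : Fin n → ℝ) : ℝ :=
  (∑ i ∈ S, (1 - u i) ^ 2 / 2) + (∑ i ∈ Sᶜ, alpha / 2 * u i ^ 2) + lam * graphTV A u


lemma path_bound {n : ℕ} (A : Fin n → Fin n → ℝ)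
    (hAsymm : ∀ i j, A i j = A j i) (hAdiag : ∀ i, A i i = 0)
    (v : Fin n → ℝ) {i s : Fin n}
    (h : Relation.ReflTransGen (fun a b => 0 < A a b) i s) :
    |v i - v s| ≤ ∑ a : Fin n, ∑ b : Fin n, if a < b ∧ 0 < A a b then |v a - v b| else 0 := by
  set G : SimpleGraph (Fin n) :=
    { Adj := fun a b => 0 < A a b,
      symm := ⟨fun a b hab => by have h' : 0 < A a b := hab; show 0 < A b a; rwa [hAsymm]⟩,
      loopless := ⟨fun a hab => by have h' : 0 < A a a := hab; rw [hAdiag] at h'; exact lt_irrefl 0 h'⟩ }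
    with hG
  have hreach : G.Reachable i s := by
    rw [SimpleGraph.reachable_iff_reflTransGen]; exact h
  obtain ⟨w⟩ := hreach
  set p := w.toPath with hp
  have tele : ∀ {a b : Fin n} (q : G.Walk a b),
      |v a - v b| ≤ (q.darts.map (fun d => |v d.toProd.1 - v d.toProd.2|)).sum := by
    intro a b q
    induction q with
    | nil => simp
    | @cons x y z hadj q ih =>
        simp only [SimpleGraph.Walk.darts_cons, List.map_cons, List.sum_cons]
        calc |v x - v z| ≤ |v x - v y| + |v y - v z| := abs_sub_le _ _ _
        _ ≤ _ := add_le_add le_rfl ih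
  have hednd : (p.1.darts.map SimpleGraph.Dart.edge).Nodup := p.2.isTrail.edges_nodup
  have hnd : p.1.darts.Nodup := hednd.of_map _
  set g : Fin n × Fin n → ℝ :=
    fun q => if q.1 < q.2 ∧ 0 < A q.1 q.2 then |v q.1 - v q.2| else 0 with hg
  set φ : G.Dart → Fin n × Fin n := fun d =>
    if d.toProd.1 < d.toProd.2 then d.toProd else (d.toProd.2, d.toProd.1) with hφ
  have hgφ : ∀ d : G.Dart, g (φ d) = |v d.toProd.1 - v d.toProd.2| := by
    intro d
    have hadj : 0 < A d.toProd.1 d.toProd.2 := d.adj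
    have hne : d.toProd.1 ≠ d.toProd.2 := G.ne_of_adj d.adj
    by_cases hlt : d.toProd.1 < d.toProd.2
    · simp only [hφ, hg, if_pos hlt]
      rw [if_pos ⟨hlt, hadj⟩]
    · have hlt2 : d.toProd.2 < d.toProd.1 := lt_of_le_of_ne (not_lt.mp hlt) (Ne.symm hne)
      simp only [hφ, hg, if_neg hlt]
      rw [if_pos ⟨hlt2, by rw [hAsymm]; exact hadj⟩, abs_sub_comm]
  have hsym : ∀ d : G.Dart, Sym2.mk (φ d).1 (φ d).2 = d.edge := by
    intro d
    by_cases hlt : d.toProd.1 < d.toProd.2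
    · simp [hφ, hlt, SimpleGraph.Dart.edge]
    · simp [hφ, hlt, SimpleGraph.Dart.edge, Sym2.eq_swap]
  have hinj : ∀ d1 ∈ p.1.darts.toFinset, ∀ d2 ∈ p.1.darts.toFinset, φ d1 = φ d2 → d1 = d2 := by
    intro d1 h1 d2 h2 heq
    have hed : d1.edge = d2.edge := by rw [← hsym d1, ← hsym d2, heq]
    exact List.inj_on_of_nodup_map hednd (List.mem_toFinset.mp h1) (List.mem_toFinset.mp h2) hed
  have hgnn : ∀ q ∈ (univ ×ˢ univ : Finset (Fin n × Fin n)), 0 ≤ g q := by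
    intro q _
    by_cases hq : q.1 < q.2 ∧ 0 < A q.1 q.2 <;> simp [hg, hq, abs_nonneg]
  calc |v i - v s| ≤ (p.1.darts.map (fun d => |v d.toProd.1 - v d.toProd.2|)).sum := tele p.1
    _ = ∑ d ∈ p.1.darts.toFinset, |v d.toProd.1 - v d.toProd.2| := (List.sum_toFinset _ hnd).symm
    _ = ∑ d ∈ p.1.darts.toFinset, g (φ d) := Finset.sum_congr rfl fun d _ => (hgφ d).symm
    _ = ∑ q ∈ p.1.darts.toFinset.image φ, g q := (Finset.sum_image hinj).symm
    _ ≤ ∑ q ∈ (univ ×ˢ univ : Finset (Fin n × Fin n)), g q := by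
        refine Finset.sum_le_sum_of_subset_of_nonneg ?_ fun q hq _ => hgnn q hq
        rw [Finset.univ_product_univ]
        exact Finset.subset_univ _
    _ = _ := by rw [Finset.sum_product]

/-- for a connected weighted graph on `n ≥ 1` nodes (connectivity:
any two nodes are joined by a path of edges, i.e. by the reflexive-transitive closure
of the adjacency relation `0 < A a b`), a single seed node `s`, and `λ·A_{ii'} > 1`
on every edge, the constant vector with value `1/(1+α(n−1))` is the unique global
minimizer of the TV-minimization objective. -/
theorem connected_large_lambda_tv_minimizer {n : ℕ} (hn : 1 ≤ n)
    (A : Fin n → Fin n → ℝ)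
    (hAsymm : ∀ i j, A i j = A j i) (hAnonneg : ∀ i j, 0 ≤ A i j)
    (hAdiag : ∀ i, A i i = 0)
    (hconn : ∀ i j : Fin n, Relation.ReflTransGen (fun a b => 0 < A a b) i j)
    (lam alpha : ℝ) (hlam : 0 < lam) (halpha : 0 < alpha)
    (hbig : ∀ i j : Fin n, 0 < A i j → 1 < lam * A i j)
    (s : Fin n)
    (uhat : Fin n → ℝ)
    (huhat : ∀ i : Fin n, uhat i = 1 / (1 + alpha * ((n : ℝ) - 1))) :
    (∀ v : Fin n → ℝ, tvObj A ({s} : Finset (Fin n)) lam alpha uhat ≤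
        tvObj A ({s} : Finset (Fin n)) lam alpha v) ∧
      (∀ u : Fin n → ℝ,
        (∀ v : Fin n → ℝ, tvObj A ({s} : Finset (Fin n)) lam alpha u ≤
          tvObj A ({s} : Finset (Fin n)) lam alpha v) → u = uhat) := by
  have hn1 : (1:ℝ) ≤ (n:ℝ) := by exact_mod_cast hn
  set c : ℝ := 1 / (1 + alpha * ((n : ℝ) - 1)) with hcdef
  have hden : 0 < 1 + alpha * ((n:ℝ) - 1) := by nlinarith
  have hc0 : 0 < c := by positivity
  have hc1 : c ≤ 1 := by
    rw [hcdef, div_le_one hden]; nlinarith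
  have hkey : alpha * ((n:ℝ) - 1) * c = 1 - c := by
    rw [hcdef]; field_simp; ring
  have hcardR : ((({s} : Finset (Fin n))ᶜ).card : ℝ) = (n:ℝ) - 1 := by
    rw [Finset.card_compl, Finset.card_singleton]
    simp only [Fintype.card_fin]
    rw [Nat.cast_sub hn]; norm_num
  -- value at uhat
  have hTV0 : graphTV A uhat = 0 := by
    unfold graphTV
    refine Finset.sum_eq_zero fun a _ => Finset.sum_eq_zero fun b _ => ?_
    rw [huhat a, huhat b]
    simp
  have hfuhat : tvObj A ({s} : Finset (Fin n)) lam alpha uhat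
      = (1 - c)^2/2 + ((n:ℝ) - 1) * (alpha/2 * c^2) := by
    unfold tvObj
    rw [hTV0, mul_zero, add_zero, Finset.sum_singleton, huhat s]
    have : ∀ i ∈ ({s} : Finset (Fin n))ᶜ, alpha / 2 * uhat i ^ 2 = alpha/2 * c^2 := by
      intro i _; rw [huhat i]
    rw [Finset.sum_congr rfl this, Finset.sum_const, nsmul_eq_mul, hcardR]
  -- master inequality
  have master : ∀ v : Fin n → ℝ,
      tvObj A ({s} : Finset (Fin n)) lam alpha uhat
        + ((v s - c)^2/2 + ∑ i ∈ ({s} : Finset (Fin n))ᶜ, alpha/2 * (v i - c)^2)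
      ≤ tvObj A ({s} : Finset (Fin n)) lam alpha v := by
    intro v
    set E : ℝ := ∑ a : Fin n, ∑ b : Fin n, if a < b ∧ 0 < A a b then |v a - v b| else 0 with hE
    have hE0 : 0 ≤ E := by
      refine Finset.sum_nonneg fun a _ => Finset.sum_nonneg fun b _ => ?_
      split
      · exact abs_nonneg _
      · exact le_rfl
    have e2 : E ≤ lam * graphTV A v := by
      unfold graphTV
      rw [Finset.mul_sum, hE]
      refine Finset.sum_le_sum fun a _ => ?_
      rw [Finset.mul_sum]
      refine Finset.sum_le_sum fun b _ => ?_
      by_cases hab : a < b ∧ 0 < A a b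
      · rw [if_pos hab, if_pos hab]
        have h1 := hbig a b hab.2
        have h2 : 0 ≤ |v a - v b| := abs_nonneg _
        nlinarith
      · rw [if_neg hab, if_neg hab, mul_zero]
    have e3 : ∑ i ∈ ({s} : Finset (Fin n))ᶜ, alpha * c * |v i - v s| ≤ E := by
      have hac : 0 ≤ alpha * c := by positivity
      calc ∑ i ∈ ({s} : Finset (Fin n))ᶜ, alpha * c * |v i - v s|
          ≤ ∑ _i ∈ ({s} : Finset (Fin n))ᶜ, alpha * c * E :=
            Finset.sum_le_sum fun i _ =>
              mul_le_mul_of_nonneg_left (path_bound A hAsymm hAdiag v (hconn i s)) hac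
        _ = ((n:ℝ) - 1) * (alpha * c) * E := by
            rw [Finset.sum_const, nsmul_eq_mul, hcardR]; ring
        _ = (1 - c) * E := by rw [← hkey]; ring
        _ ≤ E := by nlinarith
    have e4 : ∑ i ∈ ({s} : Finset (Fin n))ᶜ,
          (alpha * c * v s - alpha * c^2/2 + alpha/2 * (v i - c)^2)
        ≤ ∑ i ∈ ({s} : Finset (Fin n))ᶜ,
          (alpha/2 * v i ^ 2 + alpha * c * |v i - v s|) := by
      refine Finset.sum_le_sum fun i _ => ?_
      have h1 : v s - v i ≤ |v i - v s| := by
        rw [abs_sub_comm]; exact le_abs_self _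
      have hac : 0 ≤ alpha * c := by positivity
      nlinarith [mul_le_mul_of_nonneg_left h1 hac]
    have e5 : ∑ i ∈ ({s} : Finset (Fin n))ᶜ,
          (alpha/2 * v i ^ 2 + alpha * c * |v i - v s|)
        = (∑ i ∈ ({s} : Finset (Fin n))ᶜ, alpha/2 * v i ^ 2)
          + ∑ i ∈ ({s} : Finset (Fin n))ᶜ, alpha * c * |v i - v s| :=
      Finset.sum_add_distrib
    have e6 : ∑ i ∈ ({s} : Finset (Fin n))ᶜ,
          (alpha * c * v s - alpha * c^2/2 + alpha/2 * (v i - c)^2)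
        = ((n:ℝ) - 1) * (alpha * c * v s - alpha * c^2/2)
          + ∑ i ∈ ({s} : Finset (Fin n))ᶜ, alpha/2 * (v i - c)^2 := by
      rw [Finset.sum_add_distrib, Finset.sum_const, nsmul_eq_mul, hcardR]
    have e7 : (1 - v s)^2/2 + ((n:ℝ) - 1) * (alpha * c * v s - alpha * c^2/2)
        = ((1 - c)^2/2 + ((n:ℝ) - 1) * (alpha/2 * c^2)) + (v s - c)^2/2 := by
      linear_combination (v s - c) * hkey
    have e1 : tvObj A ({s} : Finset (Fin n)) lam alpha v
        = (1 - v s)^2/2 + (∑ i ∈ ({s} : Finset (Fin n))ᶜ, alpha/2 * v i ^ 2)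
          + lam * graphTV A v := by
      unfold tvObj
      rw [Finset.sum_singleton]
    rw [e1, hfuhat]
    linarith
  constructor
  · intro v
    have h := master v
    have h2 : 0 ≤ (v s - c)^2/2 + ∑ i ∈ ({s} : Finset (Fin n))ᶜ, alpha/2 * (v i - c)^2 :=
      add_nonneg (by positivity) (Finset.sum_nonneg fun i _ => by positivity)
    linarith
  · intro u hu
    have h1 := hu uhat
    have h2 := master u
    have hsum0 : 0 ≤ ∑ i ∈ ({s} : Finset (Fin n))ᶜ, alpha/2 * (u i - c)^2 :=
      Finset.sum_nonneg fun i _ => by positivity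
    have hslack : (u s - c)^2/2 + ∑ i ∈ ({s} : Finset (Fin n))ᶜ, alpha/2 * (u i - c)^2 ≤ 0 := by
      linarith
    have hq : 0 ≤ (u s - c)^2 := sq_nonneg _
    have hzero : ∑ i ∈ ({s} : Finset (Fin n))ᶜ, alpha/2 * (u i - c)^2 = 0 :=
      le_antisymm (by linarith) hsum0
    have hs2 : (u s - c)^2 = 0 := by linarith
    have hus : u s = c := by
      have h4 : u s - c = 0 := sq_eq_zero_iff.mp hs2
      linarith
    have hterm : ∀ i ∈ ({s} : Finset (Fin n))ᶜ, alpha/2 * (u i - c)^2 = 0 := by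
      have := (Finset.sum_eq_zero_iff_of_nonneg
        (fun i _ => by positivity : ∀ i ∈ ({s} : Finset (Fin n))ᶜ, (0:ℝ) ≤ alpha/2 * (u i - c)^2)).mp hzero
      exact this
    funext i
    rw [huhat i]
    by_cases his : i = s
    · rw [his]; exact hus
    · have hi : i ∈ ({s} : Finset (Fin n))ᶜ := by
        simp [his]
      have := hterm i hi
      have h3 : (u i - c)^2 = 0 := by
        have ha2 : alpha/2 ≠ 0 := by positivity
        exact (mul_eq_zero.mp this).resolve_left ha2
      have h4 : u i - c = 0 := sq_eq_zero_iff.mp h3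
      linarith
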